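/- Suppose $\Omega\subset\mathbb{R}^d$ is bounded open, $f\in L^2(\Omega)$, $\psi\in W^{2,\infty}(\Omega)$, $g\in L^\infty(\Omega)$, and $(\lambda,u)\in L^p(\Omega)\times W^{1,\infty}_0(\Omega)$ solves the Lagrange multiplier–characteristic function problem: $-\nabla\cdot(\lambda\nabla u)-(-\Delta\psi-f)^+\chi_{\{u=\psi\}}=f$ weakly in $\Omega$, with $|\nabla u|\le g$, $\lambda\ge 1$, $(\lambda-1)(|\nabla u|-g)=0$, $u\ge\psi$ in $\Omega$, $u=0$ on $\partial\Omega$. Then $u$ solves the variational inequality: for all $v\in H^1_0(\Omega)$ with $|\nabla v|\le g$ and $v\ge\psi$ a.e., $\int_\Omega\nabla u\cdot\nabla(v-u)\ge\int_\Omega f(v-u)$. -/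

import Mathlib

open MeasureTheory

/-- The Laplacian of `ψ`, as the trace of the second derivative. -/
noncomputable def lapl {d : ℕ} (ψ : EuclideanSpace ℝ (Fin d) → ℝ)
    (x : EuclideanSpace ℝ (Fin d)) : ℝ :=
  ∑ i : Fin d,
    fderiv ℝ (fun y => fderiv ℝ ψ y (EuclideanSpace.single i 1)) x (EuclideanSpace.single i 1)

/-- If `(λ, u)` solves the Lagrange multiplier–characteristic function problem
`-∇·(λ∇u) - (-Δψ - f)⁺ χ_{u=ψ} = f`, `|∇u| ≤ g`, `λ ≥ 1`, `(λ-1)(|∇u|-g) = 0`, `u ≥ ψ`,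
`u = 0` on `∂Ω`, then `u` solves the variational inequality with obstacle and
gradient constraint. -/
theorem lmcf_solution_solves_vi
    {d : ℕ} (Ω : Set (EuclideanSpace ℝ (Fin d))) (hΩo : IsOpen Ω)
    (hΩb : Bornology.IsBounded Ω)
    (f ψ g lam u : EuclideanSpace ℝ (Fin d) → ℝ)
    -- pointwise constraints on (λ, u)
    (hgrad : ∀ᵐ x ∂(volume.restrict Ω), ‖gradient u x‖ ≤ g x)
    (hlam : ∀ᵐ x ∂(volume.restrict Ω), 1 ≤ lam x)
    (hcomp : ∀ᵐ x ∂(volume.restrict Ω), (lam x - 1) * (‖gradient u x‖ - g x) = 0)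
    (hobst : ∀ᵐ x ∂(volume.restrict Ω), ψ x ≤ u x)
    (hbdry : ∀ x ∈ frontier Ω, u x = 0)
    -- the weak equation, tested against `v - u` for admissible `v`
    (hweak : ∀ v : EuclideanSpace ℝ (Fin d) → ℝ,
      (∀ x ∈ frontier Ω, v x = 0) →
      (∀ᵐ x ∂(volume.restrict Ω), ‖gradient v x‖ ≤ g x) →
      (∀ᵐ x ∂(volume.restrict Ω), ψ x ≤ v x) →
      IntegrableOn (fun x => lam x * inner ℝ (gradient u x) (gradient v x - gradient u x)) Ω →
      IntegrableOn (fun x => (inner ℝ (gradient u x) (gradient v x - gradient u x) : ℝ)) Ω →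
      IntegrableOn (fun x => f x * (v x - u x)) Ω →
      IntegrableOn (fun x =>
        max (-(lapl ψ x) - f x) 0 * ({y | u y = ψ y}.indicator 1 x) * (v x - u x)) Ω →
      (∫ x in Ω, lam x * inner ℝ (gradient u x) (gradient v x - gradient u x))
        - ∫ x in Ω, max (-(lapl ψ x) - f x) 0 * ({y | u y = ψ y}.indicator 1 x) * (v x - u x)
        = ∫ x in Ω, f x * (v x - u x)) :
    -- conclusion: u solves the variational inequality
    ∀ v : EuclideanSpace ℝ (Fin d) → ℝ,
      (∀ x ∈ frontier Ω, v x = 0) →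
      (∀ᵐ x ∂(volume.restrict Ω), ‖gradient v x‖ ≤ g x) →
      (∀ᵐ x ∂(volume.restrict Ω), ψ x ≤ v x) →
      IntegrableOn (fun x => lam x * inner ℝ (gradient u x) (gradient v x - gradient u x)) Ω →
      IntegrableOn (fun x => (inner ℝ (gradient u x) (gradient v x - gradient u x) : ℝ)) Ω →
      IntegrableOn (fun x => f x * (v x - u x)) Ω →
      IntegrableOn (fun x =>
        max (-(lapl ψ x) - f x) 0 * ({y | u y = ψ y}.indicator 1 x) * (v x - u x)) Ω →
      (∫ x in Ω, f x * (v x - u x)) ≤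
        ∫ x in Ω, (inner ℝ (gradient u x) (gradient v x - gradient u x) : ℝ) := by
  intro v hvb hvg hvo h1 h2 h3 h4
  have heq := hweak v hvb hvg hvo h1 h2 h3 h4
  have hpt : ∀ᵐ x ∂(volume.restrict Ω),
      lam x * inner ℝ (gradient u x) (gradient v x - gradient u x) ≤
      (inner ℝ (gradient u x) (gradient v x - gradient u x) : ℝ) := by
    filter_upwards [hgrad, hlam, hcomp, hvg] with x hgu hl hc hgv
    set t : ℝ := inner ℝ (gradient u x) (gradient v x - gradient u x) with ht
    rcases eq_or_lt_of_le hl with h | h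
    · rw [← h, one_mul]
    · have hne : lam x - 1 ≠ 0 := by linarith
      have hgeq : ‖gradient u x‖ = g x := by
        rcases mul_eq_zero.mp hc with h' | h'
        · exact absurd h' hne
        · linarith
      have hib : (inner ℝ (gradient u x) (gradient v x) : ℝ) ≤
          ‖gradient u x‖ * ‖gradient v x‖ := real_inner_le_norm _ _
      have htv : t = (inner ℝ (gradient u x) (gradient v x) : ℝ) - ‖gradient u x‖ ^ 2 := by
        rw [ht, inner_sub_right, real_inner_self_eq_norm_sq]
      have htle : t ≤ 0 := by nlinarith [norm_nonneg (gradient u x)]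
      nlinarith
  have hnn : 0 ≤ ∫ x in Ω,
      max (-(lapl ψ x) - f x) 0 * ({y | u y = ψ y}.indicator 1 x) * (v x - u x) := by
    apply integral_nonneg_of_ae
    filter_upwards [hobst, hvo] with x hu hv
    by_cases h : x ∈ {y | u y = ψ y}
    · rw [Set.indicator_of_mem h]
      have hvu : 0 ≤ v x - u x := by
        have : u x = ψ x := h
        rw [this]; linarith
      exact mul_nonneg (mul_nonneg (le_max_right _ _) (by norm_num)) hvu
    · rw [Set.indicator_of_notMem h]
      simp
  have hmono : (∫ x in Ω, lam x * inner ℝ (gradient u x) (gradient v x - gradient u x)) ≤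
      ∫ x in Ω, (inner ℝ (gradient u x) (gradient v x - gradient u x) : ℝ) :=
    integral_mono_ae h1 h2 hpt
  linarith
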